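/- arXiv:1406.5135 — 6 statements merged into one kernel-verified Lean document; each statement's English description precedes it below -/
import Mathlib

section
/- For all integers k ≥ 4, ζ(k) - ζ(k+1) ≤ 1/k². -/
open Filter Topology Finset

/-- Riemann zeta at integer arguments: ζ(k) = ∑_{n=1}^∞ 1/n^k. -/
noncomputable def zeta (k : ℕ) : ℝ := ∑' n : ℕ, 1 / (n + 1 : ℝ) ^ k

/-- b_k = (-1)^{k+1} (1 - 2^{-k}) ζ(k+1). -/
noncomputable def b (k : ℕ) : ℝ := (-1) ^ (k + 1) * (1 - (2 : ℝ) ^ (-(k : ℤ))) * zeta (k + 1)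

lemma summable_zeta_aux (k : ℕ) (hk : 2 ≤ k) :
    Summable (fun n : ℕ => 1 / ((n : ℝ) + 1) ^ k) := by
  have h1 : Summable (fun n : ℕ => 1 / (n : ℝ) ^ k) :=
    Real.summable_one_div_nat_pow.2 (by omega)
  have h2 := (summable_nat_add_iff (f := fun n : ℕ => 1 / (n : ℝ) ^ k) 1).2 h1
  refine h2.congr fun n => by push_cast; ring_nf

lemma hasSum_tel : HasSum (fun n : ℕ => 1 / ((n : ℝ) + 1) - 1 / ((n : ℝ) + 2)) 1 := by
  have hnn : ∀ n : ℕ, 0 ≤ 1 / ((n : ℝ) + 1) - 1 / ((n : ℝ) + 2) := by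
    intro n
    have h1 : (0:ℝ) < (n : ℝ) + 1 := by positivity
    have : 1 / ((n : ℝ) + 2) ≤ 1 / ((n : ℝ) + 1) := by
      apply one_div_le_one_div_of_le h1; linarith
    linarith
  rw [hasSum_iff_tendsto_nat_of_nonneg hnn]
  have key : ∀ N : ℕ, ∑ i ∈ range N, (1 / ((i : ℝ) + 1) - 1 / ((i : ℝ) + 2))
      = 1 - 1 / ((N : ℝ) + 1) := by
    intro N
    induction N with
    | zero => simp
    | succ n ih =>
      rw [Finset.sum_range_succ, ih]
      have h1 : ((n : ℝ) + 1) ≠ 0 := by positivity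
      have h2 : ((n : ℝ) + 2) ≠ 0 := by positivity
      push_cast
      field_simp
      ring
  simp only [key]
  have : Tendsto (fun N : ℕ => 1 / ((N : ℝ) + 1)) atTop (𝓝 0) :=
    tendsto_one_div_add_atTop_nhds_zero_nat
  have h := this.const_sub 1
  simpa using h

lemma sq_le_two_pow (k : ℕ) (hk : 4 ≤ k) : k ^ 2 ≤ 2 ^ k := by
  induction k, hk using Nat.le_induction with
  | base => norm_num
  | succ n hn ih =>
    have h1 : (n + 1) ^ 2 ≤ 2 * n ^ 2 := by nlinarith
    calc (n + 1) ^ 2 ≤ 2 * n ^ 2 := h1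
      _ ≤ 2 * 2 ^ n := Nat.mul_le_mul_left 2 ih
      _ = 2 ^ (n + 1) := by rw [pow_succ]; ring

theorem zeta_diff_le (k : ℕ) (hk : 4 ≤ k) :
    zeta k - zeta (k + 1) ≤ 1 / (k : ℝ) ^ 2 := by
  have hs1 : Summable (fun n : ℕ => 1 / ((n : ℝ) + 1) ^ k) := summable_zeta_aux k (by omega)
  have hs2 : Summable (fun n : ℕ => 1 / ((n : ℝ) + 1) ^ (k + 1)) :=
    summable_zeta_aux (k + 1) (by omega)
  -- difference as a single tsum
  have hdiff : zeta k - zeta (k + 1)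
      = ∑' n : ℕ, ((n : ℝ) / ((n : ℝ) + 1) ^ (k + 1)) := by
    rw [zeta, zeta, ← Summable.tsum_sub hs1 hs2]
    congr 1
    funext n
    have hpos : (0:ℝ) < ((n : ℝ) + 1) := by positivity
    have hpow : (0:ℝ) < ((n : ℝ) + 1) ^ k := by positivity
    rw [pow_succ]
    field_simp
    try ring
  rw [hdiff]
  have hf : Summable (fun n : ℕ => (n : ℝ) / ((n : ℝ) + 1) ^ (k + 1)) := by
    refine Summable.of_nonneg_of_le (fun n => by positivity) (fun n => ?_) hs1
    have hpos : (0:ℝ) < ((n : ℝ) + 1) := by positivity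
    rw [pow_succ, div_le_div_iff₀ (by positivity) (by positivity)]
    nlinarith [pow_pos hpos k]
  -- key termwise bound after shifting: (n+1)/(n+2)^(k+1) ≤ 2⁻ᵏ (1/(n+1) - 1/(n+2))
  have hkey : ∀ n : ℕ, ((n : ℝ) + 1) / ((n : ℝ) + 2) ^ (k + 1)
      ≤ (1 / 2 ^ k) * (1 / ((n : ℝ) + 1) - 1 / ((n : ℝ) + 2)) := by
    intro n
    set m : ℝ := (n : ℝ) + 1 with hm
    have hm1 : (1:ℝ) ≤ m := by rw [hm]; have : (0:ℝ) ≤ (n : ℝ) := Nat.cast_nonneg n; linarith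
    have hm0 : (0:ℝ) < m := by linarith
    have hb : (1:ℝ) ≤ (m + 1) / 2 := by linarith
    have h16 : 16 * m ^ 2 ≤ (m + 1) ^ 4 := by
      nlinarith [mul_nonneg (sq_nonneg (m - 1)) (show (0:ℝ) ≤ m ^ 2 + 6 * m + 1 by positivity)]
    have h4 : m ^ 2 ≤ ((m + 1) / 2) ^ 4 := by
      rw [div_pow]
      rw [le_div_iff₀ (by norm_num)]
      linarith
    have hmono : ((m + 1) / 2) ^ 4 ≤ ((m + 1) / 2) ^ k := pow_le_pow_right₀ hb hk
    have hmain : 2 ^ k * m ^ 2 ≤ (m + 1) ^ k := by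
      have h := h4.trans hmono
      rw [div_pow, le_div_iff₀ (by positivity)] at h
      linarith
    have hsimp : 1 / m - 1 / (m + 1) = 1 / (m * (m + 1)) := by
      field_simp
      ring
    have hr : (1 / 2 ^ k : ℝ) * (1 / (m * (m + 1))) = 1 / (2 ^ k * (m * (m + 1))) := by
      rw [div_mul_div_comm, one_mul]
    rw [show ((n : ℝ) + 2) = m + 1 from by rw [hm]; ring, hsimp, hr,
      div_le_div_iff₀ (by positivity) (by positivity), one_mul, pow_succ]
    nlinarith [mul_le_mul_of_nonneg_right hmain (show (0:ℝ) ≤ m + 1 by linarith)]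
  -- shift index
  have hshift : ∑' n : ℕ, ((n : ℝ) / ((n : ℝ) + 1) ^ (k + 1))
      = ∑' n : ℕ, (((n : ℝ) + 1) / ((n : ℝ) + 2) ^ (k + 1)) := by
    rw [Summable.tsum_eq_zero_add hf]
    push_cast
    rw [zero_div, zero_add]
    apply tsum_congr
    intro n
    ring_nf
  rw [hshift]
  have htel2 : HasSum (fun n : ℕ => (1 / 2 ^ k : ℝ) * (1 / ((n : ℝ) + 1) - 1 / ((n : ℝ) + 2)))
      ((1 / 2 ^ k : ℝ) * 1) := hasSum_tel.mul_left _
  have hfs : Summable (fun n : ℕ => ((n : ℝ) + 1) / ((n : ℝ) + 2) ^ (k + 1)) := by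
    have := (summable_nat_add_iff (f := fun n : ℕ => (n : ℝ) / ((n : ℝ) + 1) ^ (k + 1)) 1).2 hf
    refine this.congr fun n => by push_cast; ring_nf
  have hbound : ∑' n : ℕ, (((n : ℝ) + 1) / ((n : ℝ) + 2) ^ (k + 1)) ≤ (1 / 2 ^ k : ℝ) * 1 :=
    (Summable.tsum_le_tsum hkey hfs htel2.summable).trans_eq htel2.tsum_eq
  refine hbound.trans ?_
  rw [mul_one]
  have hk2 : ((k : ℝ)) ^ 2 ≤ 2 ^ k := by
    have := sq_le_two_pow k hk
    exact_mod_cast this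
  have hkpos : (0:ℝ) < (k : ℝ) ^ 2 := by positivity
  exact one_div_le_one_div_of_le hkpos hk2
end

section
/- For every integer k > 1, |b_k| - |b_{k-1}| ≤ 1/k², where b_k := (-1)^{k+1}(1 - 2^{-k})ζ(k+1). -/
open Filter Topology Finset

lemma summable_zeta (p : ℕ) (hp : 2 ≤ p) : Summable (fun n : ℕ => 1/((n:ℝ)+1)^p) := by
  have h := (Real.summable_one_div_nat_pow (p := p)).2 hp
  have := (summable_nat_add_iff (f := fun n : ℕ => 1/(n:ℝ)^p) 1).2 h
  refine this.congr fun n => by push_cast; ring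

lemma zeta_lower (p : ℕ) (hp : 2 ≤ p) :
    1 + (1/2:ℝ)^p + (1/3)^p + (1/4)^p ≤ zeta p := by
  have h := Summable.sum_le_tsum (f := fun n : ℕ => 1/((n:ℝ)+1)^p) (Finset.range 4)
    (fun i _ => by positivity) (summable_zeta p hp)
  refine le_trans (le_of_eq ?_) h
  rw [Finset.sum_range_succ, Finset.sum_range_succ, Finset.sum_range_succ,
    Finset.sum_range_succ, Finset.sum_range_zero]
  norm_num [div_pow, one_div]

lemma summable_tail (m : ℕ) : Summable (fun n : ℕ => 1/((n:ℝ)+5)^(m+3)) := by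
  have := (summable_nat_add_iff (f := fun n : ℕ => 1/((n:ℝ)+1)^(m+3)) 4).2
    (summable_zeta (m+3) (by omega))
  refine this.congr fun n => by push_cast; ring_nf

lemma tail_bound (m : ℕ) :
    ∑' n : ℕ, 1/((n:ℝ)+5)^(m+3) ≤ (1/5:ℝ)^m / 40 := by
  set f : ℕ → ℝ := fun j => 1/(((j:ℝ)+4)*((j:ℝ)+5)) with hf
  apply Summable.tsum_le_of_sum_range_le (summable_tail m)
  intro N
  have key : ∀ n : ℕ, 1/((n:ℝ)+5)^(m+3) ≤ (1/5:ℝ)^m/2 * (f n - f (n+1)) := by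
    intro n
    have h1 : (1/5:ℝ)^m/2 * (f n - f (n+1))
        = (1/5:ℝ)^m / (((n:ℝ)+4)*(((n:ℝ)+5)*((n:ℝ)+6))) := by
      simp only [hf]
      push_cast
      field_simp
      ring
    rw [h1, div_le_div_iff₀ (by positivity) (by positivity), one_mul, pow_add]
    have h2 : (1:ℝ) ≤ (1/5:ℝ)^m * ((n:ℝ)+5)^m := by
      rw [← mul_pow]
      exact one_le_pow₀ (by push_cast; nlinarith [Nat.cast_nonneg (α := ℝ) n])
    have h3 : ((n:ℝ)+4)*(((n:ℝ)+5)*((n:ℝ)+6)) ≤ ((n:ℝ)+5)^3 := by nlinarith [Nat.cast_nonneg (α := ℝ) n]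
    calc ((n:ℝ)+4)*(((n:ℝ)+5)*((n:ℝ)+6)) ≤ ((n:ℝ)+5)^3 := h3
      _ = 1 * ((n:ℝ)+5)^3 := (one_mul _).symm
      _ ≤ ((1/5:ℝ)^m * ((n:ℝ)+5)^m) * ((n:ℝ)+5)^3 :=
          mul_le_mul_of_nonneg_right h2 (by positivity)
      _ = (1/5:ℝ)^m * (((n:ℝ)+5)^m * ((n:ℝ)+5)^3) := by ring
  calc ∑ n ∈ Finset.range N, 1/((n:ℝ)+5)^(m+3)
      ≤ ∑ n ∈ Finset.range N, (1/5:ℝ)^m/2 * (f n - f (n+1)) :=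
        Finset.sum_le_sum (fun n _ => key n)
    _ = (1/5:ℝ)^m/2 * (f 0 - f N) := by
        rw [← Finset.mul_sum, Finset.sum_range_sub' f]
    _ ≤ (1/5:ℝ)^m / 40 := by
        have h0 : f 0 = 1/20 := by norm_num [hf]
        have hN : (0:ℝ) ≤ f N := by positivity
        have hp : (0:ℝ) ≤ (1/5:ℝ)^m := by positivity
        rw [h0]
        nlinarith

lemma zeta_upper (m : ℕ) :
    zeta (m+3) ≤ 1 + (1/2:ℝ)^(m+3) + (1/3)^(m+3) + (1/4)^(m+3) + (1/5:ℝ)^m/40 := by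
  have hsum := summable_zeta (m+3) (by omega)
  have hsplit := Summable.sum_add_tsum_nat_add (f := fun n : ℕ => 1/((n:ℝ)+1)^(m+3)) 4 hsum
  have htail : ∑' n : ℕ, 1/(((n:ℝ)+4)+1)^(m+3) ≤ (1/5:ℝ)^m/40 := by
    refine le_trans (le_of_eq (tsum_congr fun n => by push_cast; ring_nf)) (tail_bound m)
  have hpart : ∑ i ∈ Finset.range 4, 1/((i:ℝ)+1)^(m+3)
      = 1 + (1/2:ℝ)^(m+3) + (1/3)^(m+3) + (1/4)^(m+3) := by
    rw [Finset.sum_range_succ, Finset.sum_range_succ, Finset.sum_range_succ,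
      Finset.sum_range_succ, Finset.sum_range_zero]
    norm_num [div_pow, one_div]
  have : zeta (m+3) = ∑ i ∈ Finset.range 4, 1/((i:ℝ)+1)^(m+3)
      + ∑' n : ℕ, 1/(((n:ℝ)+4)+1)^(m+3) := by
    rw [zeta, ← hsplit]
    congr 1
    exact tsum_congr fun n => by push_cast; ring_nf
  rw [this, hpart]
  linarith

lemma zeta_nonneg (p : ℕ) : 0 ≤ zeta p :=
  tsum_nonneg fun n => by positivity

lemma abs_b_eq (k : ℕ) : |b k| = (1 - (1/2:ℝ)^k) * zeta (k+1) := by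
  have h2 : (2:ℝ)^(-(k:ℤ)) = (1/2:ℝ)^k := by
    rw [zpow_neg, zpow_natCast, one_div, inv_pow]
  have hfac : (0:ℝ) ≤ 1 - (1/2:ℝ)^k := by
    have : (1/2:ℝ)^k ≤ 1 := pow_le_one₀ (by norm_num) (by norm_num)
    linarith
  rw [b, h2, abs_mul, abs_mul, abs_pow, abs_neg, abs_one, one_pow, one_mul,
    abs_of_nonneg hfac, abs_of_nonneg (zeta_nonneg (k+1))]

lemma auxR : ∀ k : ℕ, 3 ≤ k → (k:ℝ)^2 *
    ((1/2:ℝ)^k/2 + (5/8)*(1/5:ℝ)^k + (3/2)*(1/4:ℝ)^k + (5/3)*(1/6:ℝ)^k + (7/4)*(1/8:ℝ)^k) ≤ 1 := by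
  intro k hk
  induction k, hk using Nat.le_induction with
  | base => norm_num
  | succ n hn ih =>
    have hn3 : (3:ℝ) ≤ (n:ℝ) := by exact_mod_cast hn
    have x2 := pow_nonneg (show (0:ℝ) ≤ 1/2 by norm_num) n
    have x4 := pow_nonneg (show (0:ℝ) ≤ 1/4 by norm_num) n
    have x5 := pow_nonneg (show (0:ℝ) ≤ 1/5 by norm_num) n
    have x6 := pow_nonneg (show (0:ℝ) ≤ 1/6 by norm_num) n
    have x8 := pow_nonneg (show (0:ℝ) ≤ 1/8 by norm_num) n
    have h2 : ((n:ℝ)+1)^2 ≤ (16/9) * (n:ℝ)^2 := by nlinarith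
    have hS : (0:ℝ) ≤ (1/2:ℝ)^n/2 + (5/8)*(1/5:ℝ)^n + (3/2)*(1/4:ℝ)^n
        + (5/3)*(1/6:ℝ)^n + (7/4)*(1/8:ℝ)^n := by positivity
    have key := mul_le_mul_of_nonneg_right h2 hS
    push_cast
    rw [pow_succ (1/2:ℝ), pow_succ (1/5:ℝ), pow_succ (1/4:ℝ), pow_succ (1/6:ℝ), pow_succ (1/8:ℝ)]
    nlinarith [key, ih, x2, x4, x5, x6, x8, sq_nonneg ((n:ℝ)+1)]

theorem abs_b_diff_le (k : ℕ) (hk : 1 < k) :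
    |b k| - |b (k - 1)| ≤ 1 / (k : ℝ) ^ 2 := by
  obtain ⟨j, rfl⟩ : ∃ j, k = j + 2 := ⟨k - 2, by omega⟩
  set k := j + 2 with hkdef
  have hk1 : k - 1 = j + 1 := by omega
  set a : ℝ := (1/2:ℝ)^k with ha
  set c : ℝ := (1/3:ℝ)^k with hc
  set d : ℝ := (1/4:ℝ)^k with hd
  set e : ℝ := (1/5:ℝ)^k with he
  have ha0 : 0 ≤ a := by positivity
  have hc0 : 0 ≤ c := by positivity
  have hd0 : 0 ≤ d := by positivity
  have he0 : 0 ≤ e := by positivity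
  -- upper bound on |b k|
  have hup : |b k| ≤ (1 - a) * (1 + a/2 + c/3 + d/4 + (5/8)*e) := by
    rw [abs_b_eq]
    have hz : zeta (k+1) ≤ 1 + a/2 + c/3 + d/4 + (5/8)*e := by
      have h := zeta_upper j
      have e1 : (1/2:ℝ)^(j+3) = a/2 := by rw [ha, hkdef, pow_succ]; ring
      have e2 : (1/3:ℝ)^(j+3) = c/3 := by rw [hc, hkdef, pow_succ]; ring
      have e3 : (1/4:ℝ)^(j+3) = d/4 := by rw [hd, hkdef, pow_succ]; ring
      have e4 : (1/5:ℝ)^j/40 = (5/8)*e := by rw [he, hkdef, pow_succ, pow_succ]; ring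
      have : k + 1 = j + 3 := by omega
      rw [this]
      rw [e1, e2, e3, e4] at h
      exact h
    have hf : (0:ℝ) ≤ 1 - a := by
      have : a ≤ 1 := by rw [ha]; exact pow_le_one₀ (by norm_num) (by norm_num)
      linarith
    exact mul_le_mul_of_nonneg_left hz hf
  -- lower bound on |b (k-1)|
  have hlow : (1 - 2*a) * (1 + a + c + d) ≤ |b (k - 1)| := by
    rw [hk1, abs_b_eq]
    have e5 : (1/2:ℝ)^(j+1) = 2*a := by rw [ha, hkdef, pow_succ]; ring
    have e6 : j + 1 + 1 = k := by omega
    rw [e5, e6]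
    have hz : 1 + a + c + d ≤ zeta k := by
      have h := zeta_lower k (by omega)
      rw [← ha, ← hc, ← hd] at h
      exact h
    have hf : (0:ℝ) ≤ 1 - 2*a := by
      have : (2:ℝ)*a = (1/2:ℝ)^(j+1) := e5.symm
      have h12 : (1/2:ℝ)^(j+1) ≤ 1/2 := by
        calc (1/2:ℝ)^(j+1) ≤ (1/2:ℝ)^1 := pow_le_pow_of_le_one (by norm_num) (by norm_num) (by omega)
          _ = 1/2 := pow_one _
      linarith
    exact mul_le_mul_of_nonneg_left hz hf
  have hmain : (1 - a) * (1 + a/2 + c/3 + d/4 + (5/8)*e) - (1 - 2*a) * (1 + a + c + d)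
      ≤ 1 / (k:ℝ)^2 := by
    have haa : a*a = d := by rw [ha, hd, ← mul_pow]; norm_num
    have hac : a*c = (1/6:ℝ)^k := by rw [ha, hc, ← mul_pow]; norm_num
    have had : a*d = (1/8:ℝ)^k := by rw [ha, hd, ← mul_pow]; norm_num
    have hae : 0 ≤ a*e := by positivity
    rcases Nat.eq_zero_or_pos j with hj | hj
    · subst hj
      simp only [ha, hc, hd, he, hkdef] at *
      norm_num
    · have hk3 : 3 ≤ k := by omega
      have hR := auxR k hk3
      have hk0 : (0:ℝ) < (k:ℝ)^2 := by positivity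
      have hRle : (1/2:ℝ)^k/2 + (5/8)*(1/5:ℝ)^k + (3/2)*(1/4:ℝ)^k + (5/3)*(1/6:ℝ)^k
          + (7/4)*(1/8:ℝ)^k ≤ 1/(k:ℝ)^2 := by
        rw [le_div_iff₀ hk0]
        nlinarith
      rw [← ha, ← hd, ← he] at hRle
      nlinarith [hRle, hc0, hd0, hae, haa, hac, had]
  calc |b k| - |b (k - 1)| ≤ (1 - a) * (1 + a/2 + c/3 + d/4 + (5/8)*e)
      - (1 - 2*a) * (1 + a + c + d) := by linarith
    _ ≤ 1 / (k:ℝ)^2 := hmain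
end

section
/- For all integers k ≥ 1, a_{2k} > 0 and a_{2k+1} < 0, where (a_k) is defined by a_0 = 1, a_1 = 0, and a_k = (1/k)·∑_{j=0}^{k-2} a_j b_{k-1-j} for k ≥ 2, with b_k = (-1)^{k+1}(1 - 2^{-k})ζ(k+1). -/
open Filter Topology Finset

lemma zeta_pos {k : ℕ} (hk : 2 ≤ k) : 0 < zeta k := by
  have hsum : Summable (fun n : ℕ => 1 / ((n : ℝ) + 1) ^ k) := by
    have h := Real.summable_one_div_nat_pow.mpr hk
    have h2 := (summable_nat_add_iff 1).mpr h
    convert h2 using 2 with n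
    · rfl
    push_cast
    ring
  exact Summable.tsum_pos hsum (fun n => by positivity) 0 (by norm_num)

lemma b_sign {k : ℕ} (hk : 1 ≤ k) : 0 < (-1 : ℝ) ^ (k + 1) * b k := by
  have h2 : (0:ℝ) < 1 - (2 : ℝ) ^ (-(k : ℤ)) := by
    have h1 : (2:ℝ) ^ (-(k:ℤ)) < 1 := by
      rw [zpow_neg, zpow_natCast]
      rw [inv_lt_one_iff₀]
      right
      exact one_lt_pow₀ (by norm_num) (by omega)
    linarith
  have hz : 0 < zeta (k + 1) := zeta_pos (by omega)
  have hsq : ((-1 : ℝ) ^ (k + 1)) * ((-1 : ℝ) ^ (k + 1)) = 1 := by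
    rw [← pow_add, Even.neg_one_pow ⟨k + 1, by ring⟩]
  unfold b
  calc (0:ℝ) < (1 - (2 : ℝ) ^ (-(k : ℤ))) * zeta (k + 1) := mul_pos h2 hz
    _ = (-1 : ℝ) ^ (k + 1) * ((-1) ^ (k + 1) * (1 - (2 : ℝ) ^ (-(k : ℤ))) * zeta (k + 1)) := by
        rw [show ∀ x y : ℝ, (-1:ℝ)^(k+1) * ((-1:ℝ)^(k+1) * x * y) =
          ((-1:ℝ)^(k+1) * (-1:ℝ)^(k+1)) * (x * y) from fun x y => by ring, hsq, one_mul]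

lemma key (a : ℕ → ℝ)
    (h0 : a 0 = 1) (h1 : a 1 = 0)
    (hrec : ∀ k, 2 ≤ k →
      a k = (1 / (k : ℝ)) * ∑ j ∈ Finset.range (k - 1), a j * b (k - 1 - j)) :
    ∀ k, 2 ≤ k → 0 < (-1 : ℝ) ^ k * a k := by
  intro k
  induction k using Nat.strong_induction_on with
  | _ k ih =>
  intro hk
  have hnonneg : ∀ j, j < k → 0 ≤ (-1 : ℝ) ^ j * a j := by
    intro j hj
    match j with
    | 0 => simp [h0]
    | 1 => simp [h1]
    | (m+2) => exact le_of_lt (ih _ hj (by omega))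
  have hterm : ∀ j ∈ Finset.range (k - 1),
      (-1 : ℝ) ^ k * (a j * b (k - 1 - j)) =
        ((-1 : ℝ) ^ j * a j) * ((-1 : ℝ) ^ ((k - 1 - j) + 1) * b (k - 1 - j)) := by
    intro j hj
    rw [Finset.mem_range] at hj
    have h1' : (k - 1 - j) + 1 = k - j := by omega
    have h2' : j + (k - j) = k := by omega
    rw [h1', show ((-1 : ℝ) ^ j * a j) * ((-1 : ℝ) ^ (k - j) * b (k - 1 - j)) =
      ((-1 : ℝ) ^ j * (-1 : ℝ) ^ (k - j)) * (a j * b (k - 1 - j)) from by ring,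
      ← pow_add, h2']
  have hsum : 0 < (-1 : ℝ) ^ k * ∑ j ∈ Finset.range (k - 1), a j * b (k - 1 - j) := by
    rw [Finset.mul_sum]
    apply Finset.sum_pos'
    · intro j hj
      rw [hterm j hj]
      have hjk : j < k := by rw [Finset.mem_range] at hj; omega
      have hb : 0 < (-1 : ℝ) ^ ((k - 1 - j) + 1) * b (k - 1 - j) :=
        b_sign (by rw [Finset.mem_range] at hj; omega)
      exact mul_nonneg (hnonneg j hjk) hb.le
    · refine ⟨0, Finset.mem_range.mpr (by omega), ?_⟩
      rw [hterm 0 (Finset.mem_range.mpr (by omega))]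
      have hb : 0 < (-1 : ℝ) ^ ((k - 1 - 0) + 1) * b (k - 1 - 0) :=
        b_sign (by omega)
      simpa [h0] using hb
  rw [hrec k hk]
  have hkpos : (0:ℝ) < 1 / (k : ℝ) := by positivity
  calc (0:ℝ) < (1 / (k : ℝ)) * ((-1 : ℝ) ^ k * ∑ j ∈ Finset.range (k - 1), a j * b (k - 1 - j)) :=
        mul_pos hkpos hsum
    _ = (-1 : ℝ) ^ k * ((1 / (k : ℝ)) * ∑ j ∈ Finset.range (k - 1), a j * b (k - 1 - j)) := by ring

theorem a_sign_alternating (a : ℕ → ℝ)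
    (h0 : a 0 = 1) (h1 : a 1 = 0)
    (hrec : ∀ k, 2 ≤ k →
      a k = (1 / (k : ℝ)) * ∑ j ∈ Finset.range (k - 1), a j * b (k - 1 - j)) :
    ∀ k, 1 ≤ k → 0 < a (2 * k) ∧ a (2 * k + 1) < 0 := by
  intro k hk
  have heven := key a h0 h1 hrec (2 * k) (by omega)
  have hodd := key a h0 h1 hrec (2 * k + 1) (by omega)
  rw [Even.neg_one_pow ⟨k, by ring⟩, one_mul] at heven
  rw [Odd.neg_one_pow ⟨k, by ring⟩, neg_one_mul] at hodd
  exact ⟨heven, by linarith⟩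
end

section
/- a_{k+1}/a_k → -1 as k → ∞, where (a_k) satisfies a_0 = 1, a_1 = 0, a_k = (1/k)∑_{j=0}^{k-2} a_j b_{k-1-j} for k ≥ 2 with b_k = (-1)^{k+1}(1 - 2^{-k})ζ(k+1). Equivalently, (1/(k+1))·m_{k+1}/m_k → -1 for the higher Mahler measures m_k of x - r with |r| = 1. -/
open Filter Topology Finset

noncomputable def eta (m : ℕ) : ℝ := (1 - (2 : ℝ) ^ (-(m : ℤ))) * zeta (m + 1)

lemma b_eq (m : ℕ) : b m = (-1) ^ (m + 1) * eta m := by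
  unfold b eta; ring

lemma g_summable (m : ℕ) (hm : 1 ≤ m) :
    Summable (fun n : ℕ => 1 / ((n : ℝ) + 1) ^ (m + 1)) := by
  have h := (Real.summable_one_div_nat_pow (p := m + 1)).mpr (by omega)
  have h2 := (summable_nat_add_iff (f := fun n : ℕ => 1 / (n : ℝ) ^ (m + 1)) 1).mpr h
  exact h2.congr (fun n => by push_cast; ring)

lemma eta_bounds (m : ℕ) (hm : 1 ≤ m) :
    1 - (1 / 2 : ℝ) ^ (m + 1) ≤ eta m ∧ eta m ≤ 1 := by
  set g : ℕ → ℝ := fun n => 1 / ((n : ℝ) + 1) ^ (m + 1) with hgdef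
  have hg : Summable g := g_summable m hm
  have hgnn : ∀ n, 0 ≤ g n := fun n => by positivity
  have hmono : ∀ i j : ℕ, i ≤ j → g j ≤ g i := by
    intro i j hij
    apply one_div_le_one_div_of_le (by positivity)
    apply pow_le_pow_left₀ (by positivity)
    exact_mod_cast by exact_mod_cast Nat.add_le_add_right hij 1
  have he : Summable (fun k => g (2 * k)) :=
    hg.comp_injective (fun x y h => by omega)
  have ho : Summable (fun k => g (2 * k + 1)) :=
    hg.comp_injective (fun x y h => by omega)
  have he2 : Summable (fun k => g (2 * k + 2)) :=
    hg.comp_injective (fun x y h => by omega)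
  have hsplit : (∑' k, g (2 * k)) + (∑' k, g (2 * k + 1)) = zeta (m + 1) :=
    tsum_even_add_odd he ho
  have hodd : ∀ k : ℕ, g (2 * k + 1) = (1 / 2 : ℝ) ^ (m + 1) * g k := by
    intro k
    simp only [hgdef]
    push_cast
    rw [show (2 * (k : ℝ) + 1 + 1) = 2 * ((k : ℝ) + 1) by ring, mul_pow]
    rw [div_pow, one_pow]
    field_simp
  have hE : (∑' k, g (2 * k + 1)) = (1 / 2 : ℝ) ^ (m + 1) * zeta (m + 1) := by
    rw [tsum_congr hodd, tsum_mul_left]; rfl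
  have hpow : (2 : ℝ) ^ (-(m : ℤ)) = 2 * (1 / 2 : ℝ) ^ (m + 1) := by
    rw [zpow_neg, zpow_natCast, one_div, inv_pow]
    rw [pow_succ]
    field_simp
  have heta : eta m = (∑' k, g (2 * k)) - (∑' k, g (2 * k + 1)) := by
    have h' : eta m = zeta (m + 1) - 2 * ((1 / 2 : ℝ) ^ (m + 1) * zeta (m + 1)) := by
      rw [eta, hpow]; ring
    rw [h', ← hE, ← hsplit]; ring
  constructor
  · rw [heta, ← he.tsum_sub ho]
    have h0 : g 0 - g 1 = 1 - (1 / 2 : ℝ) ^ (m + 1) := by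
      simp only [hgdef]
      norm_num [div_pow]
    rw [← h0]
    apply Summable.le_tsum (he.sub ho) 0
    intro j _
    have := hmono (2 * j) (2 * j + 1) (by omega)
    linarith
  · have hO : (∑' k, g (2 * k)) = g 0 + ∑' k, g (2 * k + 2) := by
      rw [he.tsum_eq_zero_add]
      congr 1
    have h1 : g 0 = 1 := by simp [hgdef]
    have hAB : (∑' k, g (2 * k + 2)) - (∑' k, g (2 * k + 1))
        = ∑' k, (g (2 * k + 2) - g (2 * k + 1)) := (he2.tsum_sub ho).symm
    have hnp : (∑' k, (g (2 * k + 2) - g (2 * k + 1))) ≤ 0 := by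
      apply tsum_nonpos
      intro j
      have := hmono (2 * j + 1) (2 * j + 2) (by omega)
      linarith
    rw [heta, hO, h1]
    linarith

lemma eta_le_one (m : ℕ) (hm : 1 ≤ m) : eta m ≤ 1 := (eta_bounds m hm).2
lemma eta_ge (m : ℕ) (hm : 1 ≤ m) : 1 - (1 / 2 : ℝ) ^ (m + 1) ≤ eta m := (eta_bounds m hm).1
lemma eta_nonneg (m : ℕ) (hm : 1 ≤ m) : 0 ≤ eta m := by
  have h1 := eta_ge m hm
  have h2 : (1 / 2 : ℝ) ^ (m + 1) ≤ 1 :=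
    pow_le_one₀ (by norm_num) (by norm_num)
  linarith

lemma neg_one_pow_mul_self (k : ℕ) : ((-1 : ℝ)) ^ k * (-1) ^ k = 1 := by
  rw [← pow_add]
  exact Even.neg_one_pow ⟨k, by ring⟩

lemma half_pow_sub (n j : ℕ) (h : j ≤ n) : (1 / 2 : ℝ) ^ (n - j) = (1 / 2) ^ n * 2 ^ j := by
  have h1 : (1 / 2 : ℝ) ^ n = (1 / 2) ^ (n - j) * (1 / 2) ^ j := by
    rw [← pow_add]; congr 1; omega
  rw [h1, mul_assoc, ← mul_pow]
  norm_num

lemma sum_half (n : ℕ) : ∑ j ∈ range (n + 1), (1 / 2 : ℝ) ^ (n + 2 - j) ≤ 1 / 2 := by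
  have hc : ∀ j ∈ range (n + 1), (1 / 2 : ℝ) ^ (n + 2 - j) = (1 / 2) ^ (n + 2) * 2 ^ j := by
    intro j hj
    rw [mem_range] at hj
    exact half_pow_sub (n + 2) j (by omega)
  rw [Finset.sum_congr rfl hc, ← Finset.mul_sum, geom_sum_eq (by norm_num : (2 : ℝ) ≠ 1)]
  rw [show (2 : ℝ) - 1 = 1 by norm_num, div_one]
  have h2 : (1 / 2 : ℝ) ^ (n + 1) * 2 ^ (n + 1) = 1 := by rw [← mul_pow]; norm_num
  have hp : (0 : ℝ) < (1 / 2 : ℝ) ^ (n + 1) := by positivity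
  have e : (1 / 2 : ℝ) ^ (n + 2) * ((2 : ℝ) ^ (n + 1) - 1)
      = (1 / 2) * ((1 / 2 : ℝ) ^ (n + 1) * 2 ^ (n + 1)) - (1 / 2) ^ (n + 2) := by
    rw [pow_succ]; ring
  rw [e, h2]
  have : (0 : ℝ) < (1 / 2 : ℝ) ^ (n + 2) := by positivity
  linarith

lemma geom65_bound (n : ℕ) : ∑ i ∈ range n, (6 / 5 : ℝ) ^ i ≤ 5 * (6 / 5) ^ n := by
  rw [geom_sum_eq (by norm_num : (6 / 5 : ℝ) ≠ 1)]
  rw [show (6 / 5 : ℝ) - 1 = 1 / 5 by norm_num]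
  rw [div_le_iff₀ (by norm_num : (0:ℝ) < 1/5)]
  have : (0:ℝ) < (6/5:ℝ)^n := by positivity
  nlinarith

theorem a_ratio_tendsto_neg_one (a : ℕ → ℝ)
    (h0 : a 0 = 1) (h1 : a 1 = 0)
    (hrec : ∀ k, 2 ≤ k →
      a k = (1 / (k : ℝ)) * ∑ j ∈ Finset.range (k - 1), a j * b (k - 1 - j)) :
    Tendsto (fun k => a (k + 1) / a k) atTop (𝓝 (-1)) := by
  set c : ℕ → ℝ := fun k => (-1) ^ k * a k with hcdef
  have hca : ∀ k, a k = (-1) ^ k * c k := by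
    intro k
    simp only [hcdef]
    rw [← mul_assoc, neg_one_pow_mul_self, one_mul]
  have hc0 : c 0 = 1 := by simp [hcdef, h0]
  have hc1 : c 1 = 0 := by simp [hcdef, h1]
  have hrec' : ∀ n : ℕ, ((n : ℝ) + 2) * c (n + 2)
      = ∑ j ∈ range (n + 1), c j * eta (n + 1 - j) := by
    intro n
    have hk := hrec (n + 2) (by omega)
    have hk' : a (n + 2) = (1 / ((n : ℝ) + 2)) * ∑ j ∈ range (n + 1), a j * b (n + 1 - j) := by
      convert hk using 3
      push_cast; ring
      · rfl
      · rfl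
    have hterm : ∀ j ∈ range (n + 1),
        a j * b (n + 1 - j) = (-1 : ℝ) ^ n * (c j * eta (n + 1 - j)) := by
      intro j hj
      rw [mem_range] at hj
      rw [b_eq, hca j]
      have e1 : n + 1 - j + 1 = n + 2 - j := by omega
      rw [e1]
      have e2 : ((-1 : ℝ)) ^ j * (-1) ^ (n + 2 - j) = (-1) ^ n := by
        rw [← pow_add]
        have e3 : j + (n + 2 - j) = n + 2 := by omega
        rw [e3, pow_add]
        norm_num
      calc (-1 : ℝ) ^ j * c j * ((-1) ^ (n + 2 - j) * eta (n + 1 - j))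
          = ((-1 : ℝ) ^ j * (-1) ^ (n + 2 - j)) * (c j * eta (n + 1 - j)) := by ring
        _ = (-1 : ℝ) ^ n * (c j * eta (n + 1 - j)) := by rw [e2]
    rw [Finset.sum_congr rfl hterm, ← Finset.mul_sum] at hk'
    have hne : ((n : ℝ) + 2) ≠ 0 := by positivity
    have hgoal : c (n + 2) = (-1 : ℝ) ^ (n + 2) * a (n + 2) := by simp [hcdef]
    rw [hgoal, hk']
    set S := ∑ j ∈ range (n + 1), c j * eta (n + 1 - j)
    have hp : (-1 : ℝ) ^ (n + 2) * (-1) ^ n = 1 := by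
      rw [← pow_add]
      exact Even.neg_one_pow ⟨n + 1, by ring⟩
    have : ((n : ℝ) + 2) * ((-1 : ℝ) ^ (n + 2) * (1 / ((n : ℝ) + 2) * ((-1 : ℝ) ^ n * S)))
        = ((-1 : ℝ) ^ (n + 2) * (-1) ^ n) * ((((n : ℝ) + 2) / ((n : ℝ) + 2)) * S) := by
      ring
    rw [this, hp, div_self hne, one_mul, one_mul]
  -- bounds 0 ≤ c ≤ 1
  have hcb : ∀ k, 0 ≤ c k ∧ c k ≤ 1 := by
    intro k
    induction k using Nat.strong_induction_on with
    | _ k ih =>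
      match k, ih with
      | 0, _ => rw [hc0]; norm_num
      | 1, _ => rw [hc1]; norm_num
      | (n + 2), ih =>
        have hr := hrec' n
        have hnn : ∀ j ∈ range (n + 1), 0 ≤ c j * eta (n + 1 - j) := by
          intro j hj
          rw [mem_range] at hj
          exact mul_nonneg (ih j (by omega)).1 (eta_nonneg _ (by omega))
        have hle : ∀ j ∈ range (n + 1), c j * eta (n + 1 - j) ≤ 1 := by
          intro j hj
          rw [mem_range] at hj
          have h1 := (ih j (by omega))
          have h2 := eta_le_one (n + 1 - j) (by omega)
          have h3 := eta_nonneg (n + 1 - j) (by omega)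
          nlinarith
        have hS1 : 0 ≤ ∑ j ∈ range (n + 1), c j * eta (n + 1 - j) :=
          Finset.sum_nonneg hnn
        have hS2 : ∑ j ∈ range (n + 1), c j * eta (n + 1 - j) ≤ (n : ℝ) + 1 := by
          calc ∑ j ∈ range (n + 1), c j * eta (n + 1 - j)
              ≤ ∑ j ∈ range (n + 1), (1 : ℝ) := Finset.sum_le_sum hle
            _ = (n : ℝ) + 1 := by simp
        have hpos : (0 : ℝ) < (n : ℝ) + 2 := by positivity
        constructor
        · nlinarith
        · nlinarith
  have hcge : ∀ n : ℕ, 1 / 6 ≤ c (n + 2) := by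
    intro n
    induction n using Nat.strong_induction_on with
    | _ n ih =>
      match n, ih with
      | 0, _ =>
        have hr := hrec' 0
        rw [Finset.sum_range_one] at hr
        simp only [hc0, Nat.sub_zero, one_mul] at hr
        have := eta_ge 1 le_rfl
        norm_num at this hr ⊢
        linarith
      | (m + 1), ih =>
        set n := m + 1 with hn
        have hr := hrec' n
        -- termwise lower bound
        have hterm : ∀ j ∈ range (n + 1),
            c j - (1 / 2 : ℝ) ^ (n + 2 - j) ≤ c j * eta (n + 1 - j) := by
          intro j hj
          rw [mem_range] at hj
          have h1 : 1 ≤ n + 1 - j := by omega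
          have h2 := eta_ge (n + 1 - j) h1
          have h3 : (n + 1 - j) + 1 = n + 2 - j := by omega
          rw [h3] at h2
          have h4 := (hcb j).1
          have h5 := (hcb j).2
          have h6 : (0:ℝ) < (1/2:ℝ) ^ (n + 2 - j) := by positivity
          nlinarith
        have hsum1 : ∑ j ∈ range (n + 1), (c j - (1 / 2 : ℝ) ^ (n + 2 - j))
            ≤ ∑ j ∈ range (n + 1), c j * eta (n + 1 - j) := Finset.sum_le_sum hterm
        rw [Finset.sum_sub_distrib] at hsum1
        have hhalf := sum_half n
        -- lower bound on ∑ c j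
        have hcsum : 1 + (m : ℝ) * (1 / 6) ≤ ∑ j ∈ range (n + 1), c j := by
          have e1 : ∑ j ∈ range (n + 1), c j
              = (∑ j ∈ range m, c (j + 2)) + c 1 + c 0 := by
            rw [Finset.sum_range_succ']
            congr 1
            rw [Finset.sum_range_succ']
          have e2 : (m : ℝ) * (1 / 6) ≤ ∑ j ∈ range m, c (j + 2) := by
            calc (m : ℝ) * (1 / 6) = ∑ _j ∈ range m, (1 / 6 : ℝ) := by
                  rw [Finset.sum_const]; simp [mul_comm]
              _ ≤ ∑ j ∈ range m, c (j + 2) := by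
                  apply Finset.sum_le_sum
                  intro j hj
                  rw [mem_range] at hj
                  exact ih j (by omega)
          rw [e1, hc0, hc1]
          linarith
        have hpos : (0 : ℝ) < (n : ℝ) + 2 := by positivity
        have hm3 : (n : ℝ) + 2 = (m : ℝ) + 3 := by push_cast [hn]; ring
        -- (n+2) c_{n+2} ≥ (1 + m/6) - 1/2 = (m+3)/6
        have : ((n : ℝ) + 2) * c (n + 2) ≥ 1 + (m : ℝ) * (1/6) - 1/2 := by
          rw [hr]; linarith
        rw [hm3] at this hpos
        nlinarith
  set d : ℕ → ℝ := fun i => c (i + 1) - c i with hddef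
  set eps : ℕ → ℝ := fun m => 1 - eta m with hepsdef
  have heps1 : ∀ m, 1 ≤ m → 0 ≤ eps m := fun m hm => by
    simp only [hepsdef]; linarith [eta_le_one m hm]
  have heps2 : ∀ m, 1 ≤ m → eps m ≤ (1 / 2 : ℝ) ^ (m + 1) := fun m hm => by
    simp only [hepsdef]; linarith [eta_ge m hm]
  have hd_abs : ∀ i, |d i| ≤ 1 := fun i => by
    have h1 := hcb i
    have h2 := hcb (i + 1)
    simp only [hddef]
    rw [abs_le]
    constructor <;> [linarith; linarith]
  have hetaeps : ∀ m, eta m = 1 - eps m := fun m => by simp [hepsdef]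
  have hdid : ∀ n : ℕ, ((n : ℝ) + 3) * d (n + 2)
      = -(d (n + 1)) - eps (n + 2) - ∑ i ∈ range (n + 1), d i * eps (n + 1 - i) := by
    intro n
    have hA := hrec' (n + 1)
    have hB := hrec' n
    have hcast : ((n + 1 : ℕ) : ℝ) + 2 = (n : ℝ) + 3 := by push_cast; ring
    rw [hcast] at hA
    simp only [show n + 1 + 1 = n + 2 from rfl, show n + 1 + 2 = n + 3 from rfl] at hA
    have eA : ∑ j ∈ range (n + 2), c j * eta (n + 2 - j)
        = (∑ j ∈ range (n + 2), c j) - ∑ j ∈ range (n + 2), c j * eps (n + 2 - j) := by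
      rw [← Finset.sum_sub_distrib]
      exact Finset.sum_congr rfl fun j _ => by rw [hetaeps]; ring
    have eB : ∑ j ∈ range (n + 1), c j * eta (n + 1 - j)
        = (∑ j ∈ range (n + 1), c j) - ∑ j ∈ range (n + 1), c j * eps (n + 1 - j) := by
      rw [← Finset.sum_sub_distrib]
      exact Finset.sum_congr rfl fun j _ => by rw [hetaeps]; ring
    have eC : ∑ j ∈ range (n + 2), c j = (∑ j ∈ range (n + 1), c j) + c (n + 1) :=
      Finset.sum_range_succ _ _
    have eD : ∑ j ∈ range (n + 2), c j * eps (n + 2 - j)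
        = (∑ i ∈ range (n + 1), c (i + 1) * eps (n + 1 - i)) + c 0 * eps (n + 2) := by
      rw [Finset.sum_range_succ' (fun j => c j * eps (n + 2 - j)) (n + 1)]
      congr 1
      · exact Finset.sum_congr rfl fun i hi => by
          rw [mem_range] at hi
          congr 2
          omega
    have eE : (∑ i ∈ range (n + 1), c (i + 1) * eps (n + 1 - i))
        - ∑ i ∈ range (n + 1), c i * eps (n + 1 - i)
        = ∑ i ∈ range (n + 1), d i * eps (n + 1 - i) := by
      rw [← Finset.sum_sub_distrib]
      exact Finset.sum_congr rfl fun i _ => by simp only [hddef]; ring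
    have hd2 : ((n : ℝ) + 3) * d (n + 2)
        = (((n : ℝ) + 3) * c (n + 3)) - (((n : ℝ) + 2) * c (n + 2)) - c (n + 2) := by
      simp only [hddef]
      show ((n : ℝ) + 3) * (c (n + 3) - c (n + 2)) = _
      ring
    have hd1 : d (n + 1) = c (n + 2) - c (n + 1) := rfl
    rw [hd2, hA, hB, eA, eB, eC, eD, hc0, hd1, ← eE]
    ring
  have hd_geo : ∀ i, |d i| ≤ 20 * (3 / 5 : ℝ) ^ (i + 1) := by
    intro i
    induction i using Nat.strong_induction_on with
    | _ i ih =>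
      by_cases hi : i ≤ 4
      · have h1 : |d i| ≤ 1 := hd_abs i
        have h2 : (1 : ℝ) ≤ 20 * (3 / 5) ^ (i + 1) := by
          interval_cases i <;> norm_num
        linarith
      · obtain ⟨n, hn3, rfl⟩ : ∃ n, 3 ≤ n ∧ i = n + 2 := ⟨i - 2, by omega, by omega⟩
        have hid := hdid n
        have hb1 : |d (n + 1)| ≤ 20 * (3 / 5 : ℝ) ^ (n + 2) := ih (n + 1) (by omega)
        have hb2 : eps (n + 2) ≤ (1 / 2 : ℝ) ^ (n + 3) := heps2 (n + 2) (by omega)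
        have hb2' : 0 ≤ eps (n + 2) := heps1 (n + 2) (by omega)
        have hsum : |∑ i ∈ range (n + 1), d i * eps (n + 1 - i)| ≤ 30 * (3 / 5 : ℝ) ^ (n + 1) := by
          have h65 : (1 / 2 : ℝ) ^ (n + 1) * (6 / 5) ^ (n + 1) = (3 / 5) ^ (n + 1) := by
            rw [← mul_pow]; norm_num
          calc |∑ i ∈ range (n + 1), d i * eps (n + 1 - i)|
              ≤ ∑ i ∈ range (n + 1), |d i * eps (n + 1 - i)| := Finset.abs_sum_le_sum_abs _ _
            _ ≤ ∑ i ∈ range (n + 1), 20 * (3 / 5 : ℝ) ^ (i + 1) * ((1 / 2) ^ (n + 2) * 2 ^ i) := by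
                apply Finset.sum_le_sum
                intro i hi2
                rw [mem_range] at hi2
                rw [abs_mul]
                have e1 : 1 ≤ n + 1 - i := by omega
                have e2 : (n + 1 - i) + 1 = n + 2 - i := by omega
                have h3 : |eps (n + 1 - i)| ≤ (1 / 2 : ℝ) ^ (n + 2 - i) := by
                  rw [abs_of_nonneg (heps1 _ e1)]
                  calc eps (n + 1 - i) ≤ (1 / 2 : ℝ) ^ ((n + 1 - i) + 1) := heps2 _ e1
                    _ = (1 / 2 : ℝ) ^ (n + 2 - i) := by rw [e2]
                have h4 : (1 / 2 : ℝ) ^ (n + 2 - i) = (1 / 2) ^ (n + 2) * 2 ^ i :=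
                  half_pow_sub (n + 2) i (by omega)
                have h5 := ih i (by omega)
                calc |d i| * |eps (n + 1 - i)|
                    ≤ (20 * (3 / 5 : ℝ) ^ (i + 1)) * ((1 / 2 : ℝ) ^ (n + 2 - i)) :=
                      mul_le_mul h5 h3 (abs_nonneg _) (by positivity)
                  _ = 20 * (3 / 5 : ℝ) ^ (i + 1) * ((1 / 2) ^ (n + 2) * 2 ^ i) := by rw [h4]
            _ = 20 * (3 / 5) * (1 / 2 : ℝ) ^ (n + 2) * ∑ i ∈ range (n + 1), (6 / 5 : ℝ) ^ i := by
                rw [Finset.mul_sum]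
                apply Finset.sum_congr rfl
                intro i _
                have h35 : (3 / 5 : ℝ) ^ i * 2 ^ i = (6 / 5) ^ i := by rw [← mul_pow]; norm_num
                calc 20 * (3 / 5 : ℝ) ^ (i + 1) * ((1 / 2) ^ (n + 2) * 2 ^ i)
                    = 20 * (3 / 5) * (1 / 2 : ℝ) ^ (n + 2) * ((3 / 5) ^ i * 2 ^ i) := by
                      rw [pow_succ]; ring
                  _ = 20 * (3 / 5) * (1 / 2 : ℝ) ^ (n + 2) * (6 / 5) ^ i := by rw [h35]
            _ ≤ 20 * (3 / 5) * (1 / 2 : ℝ) ^ (n + 2) * (5 * (6 / 5) ^ (n + 1)) :=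
                mul_le_mul_of_nonneg_left (geom65_bound (n + 1)) (by positivity)
            _ = 30 * (3 / 5 : ℝ) ^ (n + 1) := by
                calc 20 * (3 / 5) * (1 / 2 : ℝ) ^ (n + 2) * (5 * (6 / 5) ^ (n + 1))
                    = 30 * ((1 / 2 : ℝ) ^ (n + 1) * (6 / 5) ^ (n + 1)) := by rw [pow_succ]; ring
                  _ = 30 * (3 / 5 : ℝ) ^ (n + 1) := by rw [h65]
        set S := ∑ i ∈ range (n + 1), d i * eps (n + 1 - i) with hSdef
        have hP : (0 : ℝ) < (3 / 5 : ℝ) ^ (n + 1) := by positivity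
        have hPn : (0 : ℝ) ≤ (1 / 2 : ℝ) ^ (n + 1) := by positivity
        have htot : ((n : ℝ) + 3) * |d (n + 2)| ≤ (85/2 : ℝ) * (3 / 5 : ℝ) ^ (n + 1) := by
          have habs : ((n : ℝ) + 3) * |d (n + 2)| = |((n : ℝ) + 3) * d (n + 2)| := by
            rw [abs_mul, abs_of_nonneg (by positivity : (0 : ℝ) ≤ (n : ℝ) + 3)]
          rw [habs, hid]
          have t1 : |(-(d (n + 1)) - eps (n + 2) - S)| ≤ |d (n + 1)| + eps (n + 2) + |S| := by
            have e : -(d (n + 1)) - eps (n + 2) - S = -((d (n + 1)) + eps (n + 2) + S) := by ring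
            rw [e, abs_neg]
            calc |d (n + 1) + eps (n + 2) + S| ≤ |d (n + 1) + eps (n + 2)| + |S| := abs_add_le _ _
              _ ≤ |d (n + 1)| + |eps (n + 2)| + |S| := by
                  linarith [abs_add_le (d (n + 1)) (eps (n + 2))]
              _ = |d (n + 1)| + eps (n + 2) + |S| := by rw [abs_of_nonneg hb2']
          have h12 : (1 / 2 : ℝ) ^ (n + 3) ≤ (1 / 2) * (3 / 5 : ℝ) ^ (n + 1) := by
            have hle : (1 / 2 : ℝ) ^ (n + 1) ≤ (3 / 5 : ℝ) ^ (n + 1) :=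
              pow_le_pow_left₀ (by norm_num) (by norm_num) _
            have e : (1 / 2 : ℝ) ^ (n + 3) = (1 / 2) ^ (n + 1) * (1 / 4) := by
              rw [pow_succ, pow_succ]; ring
            nlinarith
          have e5 : (3 / 5 : ℝ) ^ (n + 2) = (3 / 5) ^ (n + 1) * (3 / 5) := pow_succ _ _
          calc |-(d (n + 1)) - eps (n + 2) - S| ≤ |d (n + 1)| + eps (n + 2) + |S| := t1
            _ ≤ 20 * (3 / 5 : ℝ) ^ (n + 2) + (1 / 2) ^ (n + 3) + 30 * (3 / 5) ^ (n + 1) := by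
                linarith
            _ ≤ (85 / 2 : ℝ) * (3 / 5) ^ (n + 1) := by rw [e5]; linarith
        have hn3' : (3 : ℝ) ≤ (n : ℝ) := by exact_mod_cast hn3
        have e6 : (3 / 5 : ℝ) ^ (n + 2 + 1) = (3 / 5) ^ (n + 1) * (9 / 25) := by
          rw [pow_succ, pow_succ]; ring
        rw [e6]
        have hdn : (0 : ℝ) ≤ |d (n + 2)| := abs_nonneg _
        nlinarith [mul_nonneg (by linarith : (0:ℝ) ≤ (n:ℝ) - 3) hdn]

  have hd_geo' : ∀ i, |c (i + 1) - c i| ≤ 20 * (3 / 5 : ℝ) ^ (i + 1) := hd_geo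
  have hcauchy : CauchySeq c := by
    apply cauchySeq_of_le_geometric (3 / 5) 12 (by norm_num)
    intro n
    rw [Real.dist_eq, abs_sub_comm]
    calc |c (n + 1) - c n| ≤ 20 * (3 / 5 : ℝ) ^ (n + 1) := hd_geo' n
      _ = 12 * (3 / 5 : ℝ) ^ n := by rw [pow_succ]; ring
  obtain ⟨A, hA⟩ := cauchySeq_tendsto_of_complete hcauchy
  have hA6 : 1 / 6 ≤ A := by
    apply ge_of_tendsto hA
    rw [eventually_atTop]
    refine ⟨2, fun k hk => ?_⟩
    obtain ⟨n, rfl⟩ : ∃ n, k = n + 2 := ⟨k - 2, by omega⟩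
    exact hcge n
  have hAne : A ≠ 0 := by intro h; rw [h] at hA6; norm_num at hA6
  have hstep : Tendsto (fun k => c (k + 1)) atTop (𝓝 A) :=
    hA.comp (tendsto_add_atTop_nat 1)
  have hdiv : Tendsto (fun k => c (k + 1) / c k) atTop (𝓝 (A / A)) := hstep.div hA hAne
  rw [div_self hAne] at hdiv
  have heq : (fun k => a (k + 1) / a k) = fun k => -(c (k + 1) / c k) := by
    funext k
    rw [hca (k + 1), hca k]
    have h1 : ((-1 : ℝ)) ^ (k + 1) * c (k + 1) = (-1 : ℝ) ^ k * (-(c (k + 1))) := by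
      rw [pow_succ]; ring
    rw [h1, mul_div_mul_left _ _ (pow_ne_zero k (by norm_num : (-1 : ℝ) ≠ 0)), neg_div]
  rw [heq]
  have := hdiv.neg
  norm_num at this
  simpa using this
end

section
/- For |s| < 1, the Akatsuka zeta Mahler measure of x - r with |r| = 1 satisfies Z(s, x-r) = Γ(s+1)/Γ(s/2+1)², where Z(s,P) = ∫₀¹ |P(e^{2πiθ})|^s dθ. -/
open Real MeasureTheory intervalIntegral Set

lemma realBeta {u v : ℝ} (hu : 0 < u) (hv : 0 < v) :
    ∫ x in (0:ℝ)..1, x ^ (u - 1) * (1 - x) ^ (v - 1) =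
      Real.Gamma u * Real.Gamma v / Real.Gamma (u + v) := by
  have h := Complex.Gamma_mul_Gamma_eq_betaIntegral (s := (u:ℂ)) (t := (v:ℂ))
    (by simpa using hu) (by simpa using hv)
  have hB : Complex.betaIntegral u v =
      ((∫ x in (0:ℝ)..1, x ^ (u - 1) * (1 - x) ^ (v - 1) : ℝ) : ℂ) := by
    rw [Complex.betaIntegral, ← intervalIntegral.integral_ofReal]
    refine intervalIntegral.integral_congr fun x hx => ?_
    rw [Set.uIcc_of_le (by norm_num : (0:ℝ) ≤ 1)] at hx
    rw [Complex.ofReal_mul, Complex.ofReal_cpow hx.1, Complex.ofReal_cpow (by linarith [hx.2] : (0:ℝ) ≤ 1 - x)]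
    push_cast
    ring
  have hGpos : 0 < Real.Gamma (u + v) := Real.Gamma_pos_of_pos (by linarith)
  have h2 : (Real.Gamma u * Real.Gamma v : ℂ) =
      (Real.Gamma (u + v) : ℂ) * ((∫ x in (0:ℝ)..1, x ^ (u - 1) * (1 - x) ^ (v - 1) : ℝ) : ℂ) := by
    rw [← hB]
    rw [← Complex.ofReal_add, Complex.Gamma_ofReal, Complex.Gamma_ofReal, Complex.Gamma_ofReal] at h
    simpa using h
  have h3 : Real.Gamma u * Real.Gamma v =
      Real.Gamma (u + v) * ∫ x in (0:ℝ)..1, x ^ (u - 1) * (1 - x) ^ (v - 1) := by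
    exact_mod_cast h2
  field_simp [hGpos.ne'] at h3 ⊢
  linarith [h3]

noncomputable def phi : ℝ → ℝ := fun θ => Real.sin (π * θ) ^ 2

lemma sin_pos_lt {θ : ℝ} (h : θ ∈ Set.Ioo (0:ℝ) (1/2)) :
    0 < Real.sin (π * θ) ∧ Real.sin (π * θ) < 1 ∧ 0 < Real.cos (π * θ) := by
  have hπ := Real.pi_pos
  have h1 : 0 < π * θ := by nlinarith [h.1]
  have h2 : π * θ < π / 2 := by nlinarith [h.2]
  refine ⟨Real.sin_pos_of_pos_of_lt_pi h1 (by linarith), ?_, Real.cos_pos_of_mem_Ioo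
    ⟨by linarith, h2⟩⟩
  have := Real.strictMonoOn_sin (a := π * θ) (b := π / 2)
    ⟨by linarith, by linarith⟩ ⟨by linarith, le_refl _⟩ h2
  simpa [Real.sin_pi_div_two] using this

lemma phi_image : phi '' Set.Ioo (0:ℝ) (1/2) = Set.Ioo 0 1 := by
  apply Set.Subset.antisymm
  · rintro x ⟨θ, hθ, rfl⟩
    obtain ⟨h1, h2, _⟩ := sin_pos_lt hθ
    simp only [phi]
    exact ⟨by positivity, by nlinarith⟩
  · have h := intermediate_value_Ioo (by norm_num : (0:ℝ) ≤ 1/2)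
      (f := phi) (by unfold phi; fun_prop)
    have e : Real.sin (π * (2:ℝ)⁻¹) = 1 := by
      rw [show π * (2:ℝ)⁻¹ = π / 2 by ring, Real.sin_pi_div_two]
    simpa [phi, e] using h

lemma phi_strictMono : StrictMonoOn phi (Set.Ioo (0:ℝ) (1/2)) := by
  intro a ha b hb hab
  obtain ⟨ha1, _, _⟩ := sin_pos_lt ha
  obtain ⟨hb1, _, _⟩ := sin_pos_lt hb
  have hπ := Real.pi_pos
  have : Real.sin (π * a) < Real.sin (π * b) :=
    Real.strictMonoOn_sin ⟨by nlinarith [ha.1], by nlinarith [ha.2]⟩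
      ⟨by nlinarith [hb.1], by nlinarith [hb.2]⟩ (by nlinarith)
  unfold phi
  nlinarith

lemma phi_deriv (θ : ℝ) : HasDerivAt phi (2 * π * (Real.sin (π * θ) * Real.cos (π * θ))) θ := by
  have h1 : HasDerivAt (fun θ : ℝ => π * θ) π θ := by
    simpa using (hasDerivAt_id θ).const_mul π
  have h2 := (Real.hasDerivAt_sin (π * θ)).comp θ h1
  have h3 : HasDerivAt phi (↑2 * (sin ∘ HMul.hMul π) θ ^ (2 - 1) * (cos (π * θ) * π)) θ := h2.fun_pow 2
  convert h3 using 1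
  simp only [Function.comp]
  ring

lemma phi_subst (g : ℝ → ℝ) :
    (∫ x in Set.Ioo (0:ℝ) 1, g x) =
      ∫ θ in Set.Ioo (0:ℝ) (1/2), (2 * π * (Real.sin (π * θ) * Real.cos (π * θ))) * g (phi θ) := by
  rw [← phi_image, integral_image_eq_integral_abs_deriv_smul measurableSet_Ioo
    (fun θ _ => (phi_deriv θ).hasDerivWithinAt) phi_strictMono.injOn]
  refine setIntegral_congr_fun measurableSet_Ioo fun θ hθ => ?_
  obtain ⟨h1, _, h3⟩ := sin_pos_lt hθ
  have hπ := Real.pi_pos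
  rw [smul_eq_mul, abs_of_pos (by positivity)]

lemma phi_integrable_iff (g : ℝ → ℝ) :
    IntegrableOn g (Set.Ioo (0:ℝ) 1) ↔
      IntegrableOn (fun θ => |2 * π * (Real.sin (π * θ) * Real.cos (π * θ))| • g (phi θ))
        (Set.Ioo (0:ℝ) (1/2)) := by
  rw [← phi_image]
  exact integrableOn_image_iff_integrableOn_abs_deriv_smul measurableSet_Ioo
    (fun θ _ => (phi_deriv θ).hasDerivWithinAt) phi_strictMono.injOn g

noncomputable def gbeta (s : ℝ) : ℝ → ℝ := fun x => x ^ ((s-1)/2) * (1-x) ^ (-(1:ℝ)/2)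

lemma gbeta_integrable {s : ℝ} (hs : -1 < s) :
    IntegrableOn (gbeta s) (Set.Ioo (0:ℝ) 1) := by
  have hu : 0 < ((((s+1)/2 : ℝ)) : ℂ).re := by simpa using by linarith
  have hv : 0 < (((1/2 : ℝ)) : ℂ).re := by simpa using by norm_num
  have h := (Complex.betaIntegral_convergent hu hv)
  rw [intervalIntegrable_iff_integrableOn_Ioc_of_le (by norm_num : (0:ℝ) ≤ 1)] at h
  have h3 : IntegrableOn _ (Set.Ioc (0:ℝ) 1) volume := h.norm
  have h2 := h3.mono_set Set.Ioo_subset_Ioc_self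
  refine h2.congr_fun (fun x hx => ?_) measurableSet_Ioo
  have hx0 : 0 < x := hx.1
  have hx1 : 0 < 1 - x := by linarith [hx.2]
  have e : ((1:ℂ) - (x:ℂ)) = ((1 - x : ℝ) : ℂ) := by push_cast; ring
  dsimp only
  rw [norm_mul, e,
    Complex.norm_cpow_eq_rpow_re_of_pos hx0, Complex.norm_cpow_eq_rpow_re_of_pos hx1]
  simp only [Complex.sub_re, Complex.ofReal_re, Complex.one_re, gbeta]
  rw [show (s+1)/2 - 1 = (s-1)/2 by ring]
  norm_num
lemma gbeta_comp {s : ℝ} {θ : ℝ} (h1 : 0 < Real.sin (π * θ)) (h3 : 0 < Real.cos (π * θ)) :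
    (2 * π * (Real.sin (π * θ) * Real.cos (π * θ))) * gbeta s (Real.sin (π * θ) ^ 2) =
      2 * π * Real.sin (π * θ) ^ s := by
  set a := Real.sin (π * θ)
  set b := Real.cos (π * θ)
  have hab : a ^ 2 + b ^ 2 = 1 := Real.sin_sq_add_cos_sq _
  have e1 : (1 : ℝ) - a ^ 2 = b ^ 2 := by linarith
  have e2 : (a ^ 2 : ℝ) ^ ((s-1)/2) = a ^ (s - 1) := by
    rw [← Real.rpow_natCast a 2, ← Real.rpow_mul h1.le]
    norm_num
    rw [show 2 * ((s-1)/2) = s - 1 by ring]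
  have e3 : (b ^ 2 : ℝ) ^ (-(1:ℝ)/2) = b⁻¹ := by
    rw [← Real.rpow_natCast b 2, ← Real.rpow_mul h3.le]
    norm_num [Real.rpow_neg_one]
  have e4 : a * a ^ (s - 1) = a ^ s := by
    rw [mul_comm, ← Real.rpow_add_one h1.ne' (s-1)]
    norm_num
  rw [gbeta, e1, e2, e3]
  field_simp
  rw [e4]

variable {s : ℝ}

variable {s : ℝ}

lemma half_integral (hs : -1 < s) :
    (∫ θ in Set.Ioo (0:ℝ) (1/2), Real.sin (π * θ) ^ s) =
      Real.Gamma ((s+1)/2) * Real.sqrt π / Real.Gamma (s/2+1) / (2 * π) ∧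
    IntegrableOn (fun θ => Real.sin (π * θ) ^ s) (Set.Ioo (0:ℝ) (1/2)) := by
  have hπ := Real.pi_pos
  have hB : (∫ x in Set.Ioo (0:ℝ) 1, gbeta s x) =
      Real.Gamma ((s+1)/2) * Real.sqrt π / Real.Gamma (s/2+1) := by
    have h := realBeta (u := (s+1)/2) (v := 1/2) (by linarith) (by norm_num)
    rw [intervalIntegral.integral_of_le (by norm_num : (0:ℝ) ≤ 1),
      MeasureTheory.integral_Ioc_eq_integral_Ioo] at h
    have e1 : (s+1)/2 - 1 = (s-1)/2 := by ring
    have e2 : (1:ℝ)/2 - 1 = -(1:ℝ)/2 := by ring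
    have e3 : (s+1)/2 + 1/2 = s/2 + 1 := by ring
    rw [e1, e2, e3] at h
    rw [show (∫ x in Set.Ioo (0:ℝ) 1, gbeta s x) =
      ∫ x in Set.Ioo (0:ℝ) 1, x ^ ((s-1)/2) * (1-x) ^ (-(1:ℝ)/2) from rfl, h,
      Real.Gamma_one_half_eq]
  have hsubst := phi_subst (gbeta s)
  have hcongr : (∫ θ in Set.Ioo (0:ℝ) (1/2),
      (2 * π * (Real.sin (π * θ) * Real.cos (π * θ))) * gbeta s (phi θ)) =
      ∫ θ in Set.Ioo (0:ℝ) (1/2), 2 * π * Real.sin (π * θ) ^ s := by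
    refine setIntegral_congr_fun measurableSet_Ioo fun θ hθ => ?_
    obtain ⟨h1, _, h3⟩ := sin_pos_lt hθ
    simpa [phi] using gbeta_comp (s := s) h1 h3
  have hint : IntegrableOn (fun θ => 2 * π * Real.sin (π * θ) ^ s) (Set.Ioo (0:ℝ) (1/2)) := by
    have h := (phi_integrable_iff (gbeta s)).mp (gbeta_integrable hs)
    refine h.congr_fun (fun θ hθ => ?_) measurableSet_Ioo
    obtain ⟨h1, _, h3⟩ := sin_pos_lt hθ
    dsimp only
    rw [smul_eq_mul, abs_of_pos (by positivity), show phi θ = Real.sin (π * θ) ^ 2 from rfl,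
      gbeta_comp h1 h3]
  constructor
  · have : (∫ θ in Set.Ioo (0:ℝ) (1/2), 2 * π * Real.sin (π * θ) ^ s) =
        2 * π * ∫ θ in Set.Ioo (0:ℝ) (1/2), Real.sin (π * θ) ^ s :=
      MeasureTheory.integral_const_mul _ _
    rw [hsubst, hcongr, this] at hB
    have e : (∫ θ in Set.Ioo (0:ℝ) (1/2), Real.sin (π * θ) ^ s) =
        (2 * π * ∫ θ in Set.Ioo (0:ℝ) (1/2), Real.sin (π * θ) ^ s) / (2 * π) := by
      field_simp
    rw [e, hB]
  · have h2 : IntegrableOn _ (Set.Ioo (0:ℝ) (1/2)) volume := hint.const_mul (2 * π)⁻¹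
    refine h2.congr_fun (fun θ hθ => ?_) measurableSet_Ioo
    field_simp

lemma reflect_integral :
    (∫ θ in Set.Ioo (1/2 : ℝ) 1, Real.sin (π * θ) ^ s) =
      ∫ θ in Set.Ioo (0:ℝ) (1/2), Real.sin (π * θ) ^ s := by
  have himg : (fun θ : ℝ => 1 - θ) '' Set.Ioo (0:ℝ) (1/2) = Set.Ioo (1/2 : ℝ) 1 := by
    rw [Set.image_const_sub_Ioo]; norm_num
  have hder : ∀ θ ∈ Set.Ioo (0:ℝ) (1/2),
      HasDerivWithinAt (fun θ : ℝ => 1 - θ) (-1) (Set.Ioo (0:ℝ) (1/2)) θ := fun θ _ => by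
    simpa using ((hasDerivAt_id θ).const_sub 1).hasDerivWithinAt
  have hinj : Set.InjOn (fun θ : ℝ => 1 - θ) (Set.Ioo (0:ℝ) (1/2)) :=
    fun a _ b _ h => by dsimp at h; linarith
  rw [← himg, integral_image_eq_integral_abs_deriv_smul measurableSet_Ioo hder hinj]
  refine setIntegral_congr_fun measurableSet_Ioo fun θ _ => ?_
  rw [smul_eq_mul, show π * (1 - θ) = π - π * θ by ring, Real.sin_pi_sub]
  norm_num

lemma reflect_integrable (h : IntegrableOn (fun θ => Real.sin (π * θ) ^ s)
    (Set.Ioo (0:ℝ) (1/2))) :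
    IntegrableOn (fun θ => Real.sin (π * θ) ^ s) (Set.Ioo (1/2 : ℝ) 1) := by
  have himg : (fun θ : ℝ => 1 - θ) '' Set.Ioo (0:ℝ) (1/2) = Set.Ioo (1/2 : ℝ) 1 := by
    rw [Set.image_const_sub_Ioo]; norm_num
  have hder : ∀ θ ∈ Set.Ioo (0:ℝ) (1/2),
      HasDerivWithinAt (fun θ : ℝ => 1 - θ) (-1) (Set.Ioo (0:ℝ) (1/2)) θ := fun θ _ => by
    simpa using ((hasDerivAt_id θ).const_sub 1).hasDerivWithinAt
  have hinj : Set.InjOn (fun θ : ℝ => 1 - θ) (Set.Ioo (0:ℝ) (1/2)) :=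
    fun a _ b _ h => by dsimp at h; linarith
  rw [← himg, integrableOn_image_iff_integrableOn_abs_deriv_smul measurableSet_Ioo hder hinj]
  refine h.congr_fun (fun θ _ => ?_) measurableSet_Ioo
  rw [smul_eq_mul, show π * (1 - θ) = π - π * θ by ring, Real.sin_pi_sub]
  norm_num

lemma total_sin_integral (hs : -1 < s) :
    (∫ θ in (0:ℝ)..1, Real.sin (π * θ) ^ s) =
      Real.Gamma ((s+1)/2) * Real.sqrt π / Real.Gamma (s/2+1) / π := by
  obtain ⟨hval, hint⟩ := half_integral hs
  have hπ := Real.pi_pos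
  have hint2 := reflect_integrable hint
  have i1 : IntervalIntegrable (fun θ => Real.sin (π * θ) ^ s) volume 0 (1/2) := by
    rw [intervalIntegrable_iff_integrableOn_Ioc_of_le (by norm_num : (0:ℝ) ≤ 1/2),
      integrableOn_Ioc_iff_integrableOn_Ioo]
    exact hint
  have i2 : IntervalIntegrable (fun θ => Real.sin (π * θ) ^ s) volume (1/2) 1 := by
    rw [intervalIntegrable_iff_integrableOn_Ioc_of_le (by norm_num : (1/2:ℝ) ≤ 1),
      integrableOn_Ioc_iff_integrableOn_Ioo]
    exact hint2
  have hadd := intervalIntegral.integral_add_adjacent_intervals i1 i2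
  rw [← hadd, intervalIntegral.integral_of_le (by norm_num : (0:ℝ) ≤ 1/2),
    intervalIntegral.integral_of_le (by norm_num : (1/2:ℝ) ≤ 1),
    MeasureTheory.integral_Ioc_eq_integral_Ioo, MeasureTheory.integral_Ioc_eq_integral_Ioo,
    reflect_integral, hval]
  field_simp
  ring

lemma abs_exp_mul_I_sub_one (x : ℝ) :
    ‖Complex.exp ((x:ℂ) * Complex.I) - 1‖ = 2 * |Real.sin (x/2)| := by
  have h1 : Complex.exp ((x:ℂ) * Complex.I) - 1 =
      Complex.mk (Real.cos x - 1) (Real.sin x) := by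
    rw [Complex.exp_mul_I]
    apply Complex.ext <;>
      simp [Complex.cos_ofReal_re, Complex.sin_ofReal_re]
  rw [h1, Complex.norm_def, Complex.normSq_mk]
  have h2 : (Real.cos x - 1) * (Real.cos x - 1) + Real.sin x * Real.sin x =
      (2 * |Real.sin (x/2)|) ^ 2 := by
    have hc : Real.cos x = 1 - 2 * Real.sin (x/2) ^ 2 := by
      have h2 := Real.cos_two_mul (x/2)
      rw [show 2 * (x/2) = x by ring] at h2
      linarith [Real.sin_sq_add_cos_sq (x/2)]
    have hsx := Real.sin_sq_add_cos_sq x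
    rw [hc] at hsx
    rw [hc, mul_pow, sq_abs]
    linear_combination hsx
  rw [h2, Real.sqrt_sq (by positivity)]

lemma G_periodic (s : ℝ) : Function.Periodic (fun θ => (2 * |Real.sin (π * θ)|) ^ s) 1 := by
  intro x
  simp only
  rw [show π * (x + 1) = π * x + π by ring, Real.sin_add_pi, abs_neg]

theorem zeta_mahler_measure_eq (r : ℂ) (hr : ‖r‖ = 1) (s : ℝ) (hs : |s| < 1) :
    ∫ θ in (0:ℝ)..1,
        (‖Complex.exp (2 * Real.pi * Complex.I * θ) - r‖) ^ s =
      Real.Gamma (s + 1) / (Real.Gamma (s / 2 + 1)) ^ 2 := by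
  obtain ⟨hs1, hs2⟩ := abs_lt.mp hs
  have hπ := Real.pi_pos
  set γ := Complex.arg r with hγ
  have hre : r = Complex.exp ((γ:ℂ) * Complex.I) := by
    conv_lhs => rw [← Complex.norm_mul_exp_arg_mul_I r]
    rw [hr, hγ]
    simp
  set G : ℝ → ℝ := fun θ => (2 * |Real.sin (π * θ)|) ^ s with hG
  set c : ℝ := γ / (2 * π) with hc
  -- Step 1: pointwise identity
  have step1 : ∀ θ : ℝ, (‖Complex.exp (2 * Real.pi * Complex.I * θ) - r‖) ^ s
      = G (θ - c) := by
    intro θ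
    have key : Complex.exp (2 * Real.pi * Complex.I * θ) - r =
        Complex.exp ((γ:ℂ) * Complex.I) *
          (Complex.exp (((2 * π * θ - γ : ℝ) : ℂ) * Complex.I) - 1) := by
      rw [mul_sub, ← Complex.exp_add, mul_one, hre]
      push_cast
      ring_nf
    rw [key, norm_mul, Complex.norm_exp_ofReal_mul_I, one_mul, abs_exp_mul_I_sub_one]
    have : (2 * π * θ - γ) / 2 = π * (θ - c) := by
      rw [hc]; field_simp
    rw [this, hG]
  rw [intervalIntegral.integral_congr (fun θ _ => step1 θ)]
  -- Step 2: periodicity to remove the shift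
  have step2 : (∫ θ in (0:ℝ)..1, G (θ - c)) = ∫ θ in (0:ℝ)..1, G θ := by
    have h := (G_periodic s).intervalIntegral_add_eq (-c) 0
    rw [zero_add] at h
    rw [intervalIntegral.integral_comp_sub_right G c, show (0:ℝ) - c = -c by ring,
      show (1:ℝ) - c = -c + 1 by ring]
    exact h
  rw [step2]
  -- Step 3: drop the absolute value and pull out 2^s
  have step3 : (∫ θ in (0:ℝ)..1, G θ) = (2:ℝ) ^ s * ∫ θ in (0:ℝ)..1, Real.sin (π * θ) ^ s := by
    rw [← intervalIntegral.integral_const_mul]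
    refine intervalIntegral.integral_congr fun θ hθ => ?_
    rw [Set.uIcc_of_le (by norm_num : (0:ℝ) ≤ 1)] at hθ
    have hsin : 0 ≤ Real.sin (π * θ) :=
      Real.sin_nonneg_of_nonneg_of_le_pi (by nlinarith [hθ.1]) (by nlinarith [hθ.2])
    rw [hG]
    simp only
    rw [abs_of_nonneg hsin, Real.mul_rpow (by norm_num) hsin]
  rw [step3, total_sin_integral hs1]
  -- Step 4: Gamma algebra
  have hdup := Real.Gamma_mul_Gamma_add_half ((s+1)/2)
  rw [show (s+1)/2 + 1/2 = s/2 + 1 by ring, show 2 * ((s+1)/2) = s + 1 by ring,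
    show 1 - (s+1) = -s by ring] at hdup
  have hP : 0 < Real.Gamma (s/2 + 1) := Real.Gamma_pos_of_pos (by linarith)
  have hA : Real.Gamma ((s+1)/2) = Real.Gamma (s+1) * (2:ℝ) ^ (-s) * Real.sqrt π /
      Real.Gamma (s/2+1) := by
    rw [eq_div_iff hP.ne']
    exact hdup
  rw [hA]
  have h2s : (2:ℝ) ^ s * (2:ℝ) ^ (-s) = 1 := by
    rw [← Real.rpow_add (by norm_num : (0:ℝ) < 2)]
    simp
  have hsqrt : Real.sqrt π * Real.sqrt π = π := Real.mul_self_sqrt hπ.le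
  set Q := Real.Gamma (s/2 + 1)
  set B := Real.Gamma (s + 1)
  have key : (2:ℝ)^s * (B * (2:ℝ)^(-s) * Real.sqrt π / Q * Real.sqrt π / Q / π) =
      ((2:ℝ)^s * (2:ℝ)^(-s)) * ((Real.sqrt π * Real.sqrt π) / π) * (B / Q^2) := by
    ring
  rw [key, h2s, hsqrt, div_self hπ.ne', one_mul, one_mul]
end

section
/- For every k > 1, 1/k² - (1 - 2^{-k})ζ(k+1) + (1 - 2^{-(k-1)})ζ(k) > 1/k² - 2^{-(k+1)} > 0. -/
open Filter Topology Finset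

private lemma aux_summable (p : ℕ) (hp : 1 ≤ p) :
    Summable (fun n : ℕ => 1 / ((n : ℝ) + 1) ^ (p + 1)) := by
  have h := (summable_nat_add_iff (f := fun n : ℕ => 1 / (n : ℝ) ^ (p + 1)) 1).mpr
    (Real.summable_one_div_nat_pow.mpr (by omega))
  exact h.congr fun n => by push_cast; ring

private lemma aux34 (j : ℕ) : (3 : ℝ) ^ (j + 4) < 2 * 4 ^ (j + 3) := by
  induction j with
  | zero => norm_num
  | succ m ih =>
    have h4 : (0 : ℝ) < 4 ^ (m + 3) := by positivity
    have e1 : (3 : ℝ) ^ (m + 1 + 4) = 3 * 3 ^ (m + 4) := by ring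
    have e2 : (4 : ℝ) ^ (m + 1 + 3) = 4 * 4 ^ (m + 3) := by ring
    rw [e1, e2]
    nlinarith

private lemma aux_sq (j : ℕ) : ((j : ℝ) + 2) ^ 2 < 2 ^ (j + 3) := by
  induction j with
  | zero => norm_num
  | succ m ih =>
    have h8 : (8 : ℝ) ≤ 2 ^ (m + 3) := by
      calc (8 : ℝ) = 2 ^ 3 := by norm_num
        _ ≤ 2 ^ (m + 3) := pow_le_pow_right₀ (by norm_num) (by omega)
    have hpow : (2 : ℝ) ^ (m + 1 + 3) = 2 * 2 ^ (m + 3) := by ring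
    push_cast
    rw [hpow]
    nlinarith [ih, h8, sq_nonneg ((m : ℝ))]

theorem eta_diff_bound (k : ℕ) (hk : 1 < k) :
    1 / (k : ℝ) ^ 2 - (1 - (2 : ℝ) ^ (-(k : ℤ))) * zeta (k + 1)
        + (1 - (2 : ℝ) ^ (-((k : ℤ) - 1))) * zeta k
      > 1 / (k : ℝ) ^ 2 - (2 : ℝ) ^ (-((k : ℤ) + 1)) ∧
    1 / (k : ℝ) ^ 2 - (2 : ℝ) ^ (-((k : ℤ) + 1)) > 0 := by
  obtain ⟨j, rfl⟩ : ∃ j, k = j + 2 := ⟨k - 2, by omega⟩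
  -- rewrite the zpow expressions as inverses of natural powers
  have e1 : (2 : ℝ) ^ (-((j + 2 : ℕ) : ℤ)) = ((2 : ℝ) ^ (j + 2))⁻¹ := by
    rw [zpow_neg, zpow_natCast]
  have e2 : (2 : ℝ) ^ (-(((j + 2 : ℕ) : ℤ) - 1)) = ((2 : ℝ) ^ (j + 1))⁻¹ := by
    have : -(((j + 2 : ℕ) : ℤ) - 1) = -((j + 1 : ℕ) : ℤ) := by push_cast; ring
    rw [this, zpow_neg, zpow_natCast]
  have e3 : (2 : ℝ) ^ (-(((j + 2 : ℕ) : ℤ) + 1)) = ((2 : ℝ) ^ (j + 3))⁻¹ := by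
    have : -(((j + 2 : ℕ) : ℤ) + 1) = -((j + 3 : ℕ) : ℤ) := by push_cast; ring
    rw [this, zpow_neg, zpow_natCast]
  rw [e1, e2, e3]
  -- the functions
  set fe : ℕ → ℝ := fun n => (2 * n) / (2 * (n : ℝ) + 1) ^ (j + 3) with hfe
  set fo : ℕ → ℝ := fun n => (2 * (n : ℝ) + 1) / (2 * (n : ℝ) + 2) ^ (j + 3) with hfo
  set f : ℕ → ℝ := fun n => (n : ℝ) / ((n : ℝ) + 1) ^ (j + 3) with hf
  have hbase2 : Summable (fun n : ℕ => 1 / ((n : ℝ) + 1) ^ (j + 2)) := aux_summable (j + 1) (by omega)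
  have hbase3 : Summable (fun n : ℕ => 1 / ((n : ℝ) + 1) ^ (j + 3)) := aux_summable (j + 2) (by omega)
  -- summability of the pieces
  have hSf : Summable f := by
    apply hbase2.of_nonneg_of_le (fun n => by positivity)
    intro n
    rw [hf]
    have h1 : (0 : ℝ) < ((n : ℝ) + 1) ^ (j + 2) := by positivity
    have h2 : (0 : ℝ) < ((n : ℝ) + 1) ^ (j + 3) := by positivity
    rw [div_le_div_iff₀ h2 h1]
    have : ((n : ℝ) + 1) ^ (j + 3) = ((n : ℝ) + 1) ^ (j + 2) * ((n : ℝ) + 1) := by ring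
    nlinarith [pow_nonneg (show (0:ℝ) ≤ (n:ℝ)+1 by positivity) (j + 2)]
  have hSfe : Summable fe := by
    apply hbase2.of_nonneg_of_le (fun n => by positivity)
    intro n
    rw [hfe]
    have h1 : (0 : ℝ) < ((n : ℝ) + 1) ^ (j + 2) := by positivity
    have h2 : (0 : ℝ) < (2 * (n : ℝ) + 1) ^ (j + 3) := by positivity
    rw [div_le_div_iff₀ h2 h1]
    have hle : ((n : ℝ) + 1) ^ (j + 2) ≤ (2 * (n : ℝ) + 1) ^ (j + 2) :=
      pow_le_pow_left₀ (by positivity) (by linarith) _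
    calc 2 * (n : ℝ) * ((n : ℝ) + 1) ^ (j + 2)
        ≤ (2 * (n : ℝ) + 1) * (2 * (n : ℝ) + 1) ^ (j + 2) := by
          apply mul_le_mul (by linarith) hle (by positivity) (by positivity)
      _ = (2 * (n : ℝ) + 1) ^ (j + 3) := by ring
      _ = 1 * (2 * (n : ℝ) + 1) ^ (j + 3) := by ring
  have hSfo : Summable fo := by
    apply hbase2.of_nonneg_of_le (fun n => by positivity)
    intro n
    rw [hfo]
    have h1 : (0 : ℝ) < ((n : ℝ) + 1) ^ (j + 2) := by positivity
    have h2 : (0 : ℝ) < (2 * (n : ℝ) + 2) ^ (j + 3) := by positivity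
    rw [div_le_div_iff₀ h2 h1]
    have hle : ((n : ℝ) + 1) ^ (j + 2) ≤ (2 * (n : ℝ) + 2) ^ (j + 2) :=
      pow_le_pow_left₀ (by positivity) (by linarith) _
    calc (2 * (n : ℝ) + 1) * ((n : ℝ) + 1) ^ (j + 2)
        ≤ (2 * (n : ℝ) + 2) * (2 * (n : ℝ) + 2) ^ (j + 2) := by
          apply mul_le_mul (by linarith) hle (by positivity) (by positivity)
      _ = (2 * (n : ℝ) + 2) ^ (j + 3) := by ring
      _ = 1 * (2 * (n : ℝ) + 2) ^ (j + 3) := by ring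
  -- step 1: ζ(k) - ζ(k+1) = ∑' f
  have hT1 : zeta (j + 2) - zeta (j + 3) = ∑' n, f n := by
    rw [zeta, zeta, ← Summable.tsum_sub hbase2 hbase3]
    apply tsum_congr
    intro n
    have hx : ((n : ℝ) + 1) ≠ 0 := by positivity
    rw [hf]
    field_simp
    ring
  -- step 2: even/odd split
  have h2n : ∀ n : ℕ, f (2 * n) = fe n := by
    intro n; rw [hf, hfe]; push_cast; ring_nf
  have h2n1 : ∀ n : ℕ, f (2 * n + 1) = fo n := by
    intro n; rw [hf, hfo]; push_cast; ring_nf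
  have hsplit : (∑' n, fe n) + (∑' n, fo n) = ∑' n, f n := by
    rw [← tsum_congr h2n, ← tsum_congr h2n1]
    exact tsum_even_add_odd (hSfe.congr fun n => (h2n n).symm)
      (hSfo.congr fun n => (h2n1 n).symm)
  -- step 3: c·ζ(k) - d·ζ(k+1) = 2 ∑' fo
  have hT2 : ((2:ℝ) ^ (j + 1))⁻¹ * zeta (j + 2) - ((2:ℝ) ^ (j + 2))⁻¹ * zeta (j + 3)
      = 2 * ∑' n, fo n := by
    rw [zeta, zeta, ← Summable.tsum_mul_left _ hbase2, ← Summable.tsum_mul_left _ hbase3,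
      ← Summable.tsum_sub (hbase2.mul_left _) (hbase3.mul_left _), ← Summable.tsum_mul_left _ hSfo]
    apply tsum_congr
    intro n
    have hx : ((n : ℝ) + 1) ≠ 0 := by positivity
    have h2 : ((2:ℝ)) ≠ 0 := by norm_num
    rw [hfo]
    have key : (2 * (n : ℝ) + 2) ^ (j + 3) = 2 ^ (j + 3) * ((n : ℝ) + 1) ^ (j + 3) := by
      rw [← mul_pow]; ring_nf
    simp only [key]
    field_simp
    ring
  -- the key inequality: fo n ≤ fe n for n ≥ 1
  have hkey : ∀ n : ℕ, 1 ≤ n → fo n ≤ fe n := by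
    intro n hn
    have hn1 : (1 : ℝ) ≤ (n : ℝ) := by exact_mod_cast hn
    set a : ℝ := 2 * (n : ℝ) + 1 with ha
    have ha3 : (3 : ℝ) ≤ a := by rw [ha]; linarith
    have ha0 : (0 : ℝ) < a := by linarith
    rw [hfe, hfo]
    have h1 : (0 : ℝ) < (2 * (n : ℝ) + 2) ^ (j + 3) := by positivity
    have h2 : (0 : ℝ) < (2 * (n : ℝ) + 1) ^ (j + 3) := by positivity
    rw [div_le_div_iff₀ h1 h2]
    -- goal: (2n+1) * (2n+1)^(j+3) ≤ 2n * (2n+2)^(j+3), i.e. a^(j+4) ≤ (a-1)(a+1)^(j+3)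
    have hbin : 1 + ((j : ℝ) + 3) * (1 / a) ≤ (1 + 1 / a) ^ (j + 3) := by
      have h1a : (0 : ℝ) < 1 / a := by positivity
      have := one_add_mul_le_pow (a := 1 / a) (by linarith : (-2 : ℝ) ≤ 1 / a) (j + 3)
      calc 1 + ((j : ℝ) + 3) * (1 / a) = 1 + ((j + 3 : ℕ) : ℝ) * (1 / a) := by push_cast; ring
        _ ≤ (1 + 1 / a) ^ (j + 3) := this
    have hpow : a ^ (j + 3) + ((j : ℝ) + 3) * a ^ (j + 2) ≤ (a + 1) ^ (j + 3) := by
      have hmul := mul_le_mul_of_nonneg_right hbin (by positivity : (0:ℝ) ≤ a ^ (j + 3))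
      have hEq : (1 + 1 / a) ^ (j + 3) * a ^ (j + 3) = (a + 1) ^ (j + 3) := by
        rw [← mul_pow]; field_simp
      have hEq2 : (1 + ((j : ℝ) + 3) * (1 / a)) * a ^ (j + 3)
          = a ^ (j + 3) + ((j : ℝ) + 3) * a ^ (j + 2) := by
        have : a ^ (j + 3) = a ^ (j + 2) * a := by ring
        field_simp [this]
        ring
      rw [hEq2, hEq] at hmul
      exact hmul
    have hfin : a * a ^ (j + 3) ≤ (a - 1) * (a + 1) ^ (j + 3) := by
      have hstep : (a - 1) * (a ^ (j + 3) + ((j : ℝ) + 3) * a ^ (j + 2))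
          ≤ (a - 1) * (a + 1) ^ (j + 3) :=
        mul_le_mul_of_nonneg_left hpow (by linarith)
      have hp2 : (0 : ℝ) < a ^ (j + 2) := by positivity
      have hp3 : a ^ (j + 3) = a ^ (j + 2) * a := by ring
      have hgoal2 : a * a ^ (j + 3) = a ^ (j + 2) * (a * a) := by rw [hp3]; ring
      have expand : (a - 1) * (a ^ (j + 3) + ((j : ℝ) + 3) * a ^ (j + 2))
          = a ^ (j + 2) * ((a - 1) * (a + ((j : ℝ) + 3))) := by rw [hp3]; ring
      rw [hgoal2]
      calc a ^ (j + 2) * (a * a)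
          ≤ a ^ (j + 2) * ((a - 1) * (a + ((j : ℝ) + 3))) := by
            apply mul_le_mul_of_nonneg_left _ (le_of_lt hp2)
            have hj0 : (0 : ℝ) ≤ (j : ℝ) := Nat.cast_nonneg j
            nlinarith
        _ = (a - 1) * (a ^ (j + 3) + ((j : ℝ) + 3) * a ^ (j + 2)) := expand.symm
        _ ≤ (a - 1) * (a + 1) ^ (j + 3) := hstep
    calc (2 * (n : ℝ) + 1) * (2 * (n : ℝ) + 1) ^ (j + 3) = a * a ^ (j + 3) := by rw [ha]
      _ ≤ (a - 1) * (a + 1) ^ (j + 3) := hfin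
      _ = 2 * (n : ℝ) * (2 * (n : ℝ) + 2) ^ (j + 3) := by rw [ha]; ring_nf
  -- strict inequality at n = 1
  have hstrict : fo 1 < fe 1 := by
    rw [hfe, hfo]
    push_cast
    have h3 : (0 : ℝ) < (3 : ℝ) ^ (j + 3) := by positivity
    have h4 : (0 : ℝ) < (4 : ℝ) ^ (j + 3) := by positivity
    rw [div_lt_div_iff₀ (by norm_num : (0:ℝ) < (2*(1:ℝ)+2)^(j+3) ) (by norm_num : (0:ℝ) < (2*(1:ℝ)+1)^(j+3))] <;>
      norm_num
    have := aux34 j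
    calc (3:ℝ) * 3 ^ (j + 3) = 3 ^ (j + 4) := by ring
      _ < 2 * 4 ^ (j + 3) := aux34 j
  -- lower bound for ∑' (fe - fo)
  have hS : Summable (fun n => fe n - fo n) := hSfe.sub hSfo
  have hlow : -((2:ℝ) ^ (j + 3))⁻¹ < ∑' n, (fe n - fo n) := by
    have hind : ∑' n : ℕ, (if n = 0 then -((2:ℝ) ^ (j + 3))⁻¹ else 0)
        = -((2:ℝ) ^ (j + 3))⁻¹ := tsum_ite_eq 0 _
    rw [← hind]
    apply Summable.tsum_lt_tsum (i := 1)
    · intro n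
      show (if n = 0 then -((2:ℝ) ^ (j + 3))⁻¹ else 0) ≤ fe n - fo n
      by_cases hn : n = 0
      · subst hn
        rw [if_pos rfl, hfe, hfo]
        norm_num
      · rw [if_neg hn]
        have : 1 ≤ n := Nat.one_le_iff_ne_zero.mpr hn
        linarith [hkey n this]
    · show (if (1:ℕ) = 0 then -((2:ℝ) ^ (j + 3))⁻¹ else 0) < fe 1 - fo 1
      rw [if_neg one_ne_zero]
      linarith [hstrict]
    · exact summable_of_finite_support (Set.Finite.subset (Set.finite_singleton 0)
        (fun x hx => by by_contra h; simp at h; simp [h] at hx))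
    · exact hS
  -- second part: 1/k² > 2^{-(k+1)}
  have hsq : (0:ℝ) < 1 / ((j:ℝ) + 2) ^ 2 - ((2:ℝ) ^ (j + 3))⁻¹ := by
    have h1 : (0 : ℝ) < ((j : ℝ) + 2) ^ 2 := by positivity
    have h2 : (0 : ℝ) < (2 : ℝ) ^ (j + 3) := by positivity
    have hlt : ((2:ℝ) ^ (j + 3))⁻¹ < 1 / ((j:ℝ) + 2) ^ 2 := by
      rw [inv_eq_one_div, div_lt_div_iff₀ h2 h1]
      nlinarith [aux_sq j]
    linarith
  have hz : zeta (j + 2 + 1) = zeta (j + 3) := by norm_num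
  constructor
  · rw [hz]
    push_cast
    have hmain : (1 - ((2:ℝ) ^ (j + 1))⁻¹) * zeta (j + 2)
        - (1 - ((2:ℝ) ^ (j + 2))⁻¹) * zeta (j + 3) > -((2:ℝ) ^ (j + 3))⁻¹ := by
      have hid : (1 - ((2:ℝ) ^ (j + 1))⁻¹) * zeta (j + 2)
          - (1 - ((2:ℝ) ^ (j + 2))⁻¹) * zeta (j + 3)
          = ∑' n, (fe n - fo n) := by
        have hsub : (∑' n, fe n) - ∑' n, fo n = ∑' n, (fe n - fo n) :=
          (Summable.tsum_sub hSfe hSfo).symm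
        calc (1 - ((2:ℝ) ^ (j + 1))⁻¹) * zeta (j + 2)
            - (1 - ((2:ℝ) ^ (j + 2))⁻¹) * zeta (j + 3)
            = (zeta (j + 2) - zeta (j + 3))
              - (((2:ℝ) ^ (j + 1))⁻¹ * zeta (j + 2) - ((2:ℝ) ^ (j + 2))⁻¹ * zeta (j + 3)) := by
              ring
          _ = (∑' n, f n) - 2 * ∑' n, fo n := by rw [hT1, hT2]
          _ = ((∑' n, fe n) + ∑' n, fo n) - 2 * ∑' n, fo n := by rw [hsplit]
          _ = (∑' n, fe n) - ∑' n, fo n := by ring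
          _ = ∑' n, (fe n - fo n) := hsub
      rw [hid]
      exact hlow
    push_cast at hmain ⊢
    linarith
  · have hc : ((j + 2 : ℕ) : ℝ) = (j : ℝ) + 2 := by push_cast; ring
    rw [hc]
    exact hsq
end
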